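/- Under the bootstrap labeling distribution, the covariance of the standardized graph statistic R(G(Z_N)) and the centered bootstrap count B-bar_N = (B_N - N1)/sqrt(N) (where B_N is the number of labels equal to 1) equals (N1*N2/N^2) + (N-2)*(N1^2*N2/N^3) - N1^2*N2/N^2, which converges to (1/2)*r*(1-2p) as N -> infinity with N1/N -> p, where r = 2*p*(1-p). -/

import Mathlib

open Finset Filter

/-- Expectation under i.i.d. bootstrap labeling with `P(c i = 0) = N1/N`, `P(c i = 1) = N2/N`. -/
noncomputable def bootExp (N N1 N2 : ℕ) (f : (Fin N → Fin 2) → ℝ) : ℝ :=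
  ∑ c : Fin N → Fin 2, (∏ i, (if c i = 0 then (N1 : ℝ) / N else (N2 : ℝ) / N)) * f c

section aux
variable (N N1 N2 : ℕ)

lemma bootExp_congr {f g : (Fin N → Fin 2) → ℝ} (h : ∀ c, f c = g c) :
    bootExp N N1 N2 f = bootExp N N1 N2 g := by
  unfold bootExp; exact Finset.sum_congr rfl fun c _ => by rw [h c]

lemma bootExp_sum {ι : Type*} (t : Finset ι) (f : ι → (Fin N → Fin 2) → ℝ) :
    bootExp N N1 N2 (fun c => ∑ j ∈ t, f j c) = ∑ j ∈ t, bootExp N N1 N2 (f j) := by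
  unfold bootExp
  rw [Finset.sum_comm]
  exact Finset.sum_congr rfl fun c _ => by rw [Finset.mul_sum]

lemma bootExp_const_mul (a : ℝ) (f : (Fin N → Fin 2) → ℝ) :
    bootExp N N1 N2 (fun c => a * f c) = a * bootExp N N1 N2 f := by
  unfold bootExp
  rw [Finset.mul_sum]
  exact Finset.sum_congr rfl fun c _ => by ring

lemma bootExp_sub (f g : (Fin N → Fin 2) → ℝ) :
    bootExp N N1 N2 (fun c => f c - g c) = bootExp N N1 N2 f - bootExp N N1 N2 g := by
  unfold bootExp
  rw [← Finset.sum_sub_distrib]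
  exact Finset.sum_congr rfl fun c _ => by ring

lemma bootExp_indicator (hN : 0 < N) (hsum : N1 + N2 = N)
    (s : Finset (Fin N)) (v : Fin N → Fin 2) :
    bootExp N N1 N2 (fun c => ∏ i ∈ s, (if c i = v i then (1 : ℝ) else 0))
      = ∏ i ∈ s, (if v i = 0 then (N1 : ℝ) / N else (N2 : ℝ) / N) := by
  unfold bootExp
  have hNne : (N : ℝ) ≠ 0 := Nat.cast_ne_zero.mpr hN.ne'
  have step : ∀ c : Fin N → Fin 2,
      (∏ i, (if c i = 0 then (N1 : ℝ) / N else (N2 : ℝ) / N)) *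
        ∏ i ∈ s, (if c i = v i then (1 : ℝ) else 0)
      = ∏ i, ((if c i = 0 then (N1 : ℝ) / N else (N2 : ℝ) / N) *
          (if i ∈ s then (if c i = v i then (1 : ℝ) else 0) else 1)) := by
    intro c
    rw [Finset.prod_mul_distrib]
    congr 1
    symm
    rw [Finset.prod_ite_mem, Finset.univ_inter]
  rw [Finset.sum_congr rfl fun c _ => step c]
  have := (Finset.prod_univ_sum (fun _ : Fin N => (Finset.univ : Finset (Fin 2)))
    (fun i x => ((if x = 0 then (N1 : ℝ) / N else (N2 : ℝ) / N) *
          (if i ∈ s then (if x = v i then (1 : ℝ) else 0) else 1)))).symm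
  rw [Fintype.piFinset_univ] at this
  rw [this]
  rw [← Finset.prod_mul_prod_compl s]
  have h1 : ∀ i ∈ s, (∑ x : Fin 2, ((if x = 0 then (N1 : ℝ) / N else (N2 : ℝ) / N) *
          (if i ∈ s then (if x = v i then (1 : ℝ) else 0) else 1)))
      = (if v i = 0 then (N1 : ℝ) / N else (N2 : ℝ) / N) := by
    intro i hi
    simp only [hi, if_true, Fin.sum_univ_two]
    rcases em (v i = 0) with h | h
    · simp [h]
    · have h1 : v i = 1 := by omega
      simp [h1]
  have h2 : ∀ i ∈ sᶜ, (∑ x : Fin 2, ((if x = 0 then (N1 : ℝ) / N else (N2 : ℝ) / N) *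
          (if i ∈ s then (if x = v i then (1 : ℝ) else 0) else 1))) = 1 := by
    intro i hi
    rw [Finset.mem_compl] at hi
    simp only [hi, if_false, Fin.sum_univ_two, mul_one,
      if_pos (rfl : (0 : Fin 2) = 0), if_neg (by decide : ¬ (1 : Fin 2) = 0), if_true]
    rw [← add_div, ← Nat.cast_add, hsum, div_self hNne]
  rw [Finset.prod_congr rfl h1, Finset.prod_congr rfl h2, Finset.prod_const_one, mul_one]

end aux

section aux2
variable (N N1 N2 : ℕ)

lemma bootExp_one (hN : 0 < N) (hsum : N1 + N2 = N) :
    bootExp N N1 N2 (fun _ => (1 : ℝ)) = 1 := by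
  simpa using bootExp_indicator N N1 N2 hN hsum ∅ (fun _ => 0)

lemma bootExp_const (hN : 0 < N) (hsum : N1 + N2 = N) (a : ℝ) :
    bootExp N N1 N2 (fun _ => a) = a := by
  have h := bootExp_const_mul N N1 N2 a (fun _ => (1 : ℝ))
  simp only [mul_one] at h
  rw [h, bootExp_one N N1 N2 hN hsum, mul_one]

lemma bootExp_ind0 (hN : 0 < N) (hsum : N1 + N2 = N) (i : Fin N) :
    bootExp N N1 N2 (fun c => if c i = 0 then (1 : ℝ) else 0) = (N1 : ℝ) / N := by
  simpa using bootExp_indicator N N1 N2 hN hsum {i} (fun _ => 0)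

lemma bootExp_pair (hN : 0 < N) (hsum : N1 + N2 = N) {a b : Fin N} (hab : a ≠ b) :
    bootExp N N1 N2 (fun c => if c a = 0 ∧ c b = 1 then (1 : ℝ) else 0)
      = ((N1 : ℝ) / N) * ((N2 : ℝ) / N) := by
  have h := bootExp_indicator N N1 N2 hN hsum {a, b} (fun j => if j = a then 0 else 1)
  simp [Finset.prod_pair hab, (show ¬ b = a from fun e => hab e.symm)] at h
  rw [← h]
  apply bootExp_congr
  intro c
  by_cases h1 : c a = 0 <;> by_cases h2 : c b = 1 <;> simp [h1, h2]

lemma bootExp_triple (hN : 0 < N) (hsum : N1 + N2 = N) {a b d : Fin N}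
    (hab : a ≠ b) (had : a ≠ d) (hbd : b ≠ d) :
    bootExp N N1 N2 (fun c =>
        (if c a = 0 ∧ c b = 1 then (1 : ℝ) else 0) * (if c d = 0 then (1 : ℝ) else 0))
      = ((N1 : ℝ) / N) * ((N2 : ℝ) / N) * ((N1 : ℝ) / N) := by
  have h := bootExp_indicator N N1 N2 hN hsum {a, b, d} (fun j => if j = b then 1 else 0)
  have hmem1 : a ∉ ({b, d} : Finset (Fin N)) := by simp [hab, had]
  have hmem2 : b ∉ ({d} : Finset (Fin N)) := by simp [hbd]
  simp [show ({a, b, d} : Finset (Fin N)) = insert a (insert b {d}) from rfl,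
    Finset.prod_insert hmem1, Finset.prod_insert hmem2, Finset.prod_singleton,
    hab, hbd, (show ¬ d = b from fun e => hbd e.symm)] at h
  rw [mul_assoc, ← h]
  apply bootExp_congr
  intro c
  by_cases h1 : c a = 0 <;> by_cases h2 : c b = 1 <;> by_cases h3 : c d = 0 <;>
    simp [h1, h2, h3]

end aux2

lemma edge_sum (N N1 N2 : ℕ) (hN : 0 < N) (hsum : N1 + N2 = N)
    {a b : Fin N} (hab : a ≠ b) :
    ∑ i : Fin N, bootExp N N1 N2 (fun c =>
        (if c a = 0 ∧ c b = 1 then (1 : ℝ) else 0)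
          * ((if c i = 0 then (1 : ℝ) else 0) - (N1 : ℝ) / N))
      = (N1 : ℝ) * N2 / (N : ℝ) ^ 2 + ((N : ℝ) - 2) * ((N1 : ℝ) ^ 2 * N2 / (N : ℝ) ^ 3)
          - (N1 : ℝ) ^ 2 * N2 / (N : ℝ) ^ 2 := by
  have hNne : (N : ℝ) ≠ 0 := Nat.cast_ne_zero.mpr hN.ne'
  set w0 : ℝ := (N1 : ℝ) / N with hw0
  set w1 : ℝ := (N2 : ℝ) / N with hw1
  have hstep : ∀ i : Fin N,
      bootExp N N1 N2 (fun c =>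
        (if c a = 0 ∧ c b = 1 then (1 : ℝ) else 0)
          * ((if c i = 0 then (1 : ℝ) else 0) - w0))
      = (if i = a then w0 * w1 else if i = b then 0 else w0 * w1 * w0) - w0 * (w0 * w1) := by
    intro i
    have hc := bootExp_congr N N1 N2 (f := fun c =>
        (if c a = 0 ∧ c b = 1 then (1 : ℝ) else 0)
          * ((if c i = 0 then (1 : ℝ) else 0) - w0))
      (g := fun c =>
        (if c a = 0 ∧ c b = 1 then (1 : ℝ) else 0) * (if c i = 0 then (1 : ℝ) else 0)
          - w0 * (if c a = 0 ∧ c b = 1 then (1 : ℝ) else 0)) (fun c => by ring)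
    rw [hc]
    have hsub := bootExp_sub N N1 N2
      (fun c => (if c a = 0 ∧ c b = 1 then (1 : ℝ) else 0) * (if c i = 0 then (1 : ℝ) else 0))
      (fun c => w0 * (if c a = 0 ∧ c b = 1 then (1 : ℝ) else 0))
    rw [hsub, bootExp_const_mul, bootExp_pair N N1 N2 hN hsum hab]
    congr 1
    rcases eq_or_ne i a with h1 | h1
    · rw [if_pos h1, h1]
      have hc2 := bootExp_congr N N1 N2 (f := fun c =>
          (if c a = 0 ∧ c b = 1 then (1 : ℝ) else 0) * (if c a = 0 then (1 : ℝ) else 0))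
        (g := fun c => (if c a = 0 ∧ c b = 1 then (1 : ℝ) else 0)) (fun c => by
          by_cases h2 : c a = 0 <;> simp [h2])
      rw [hc2, bootExp_pair N N1 N2 hN hsum hab]
    · rcases eq_or_ne i b with h2 | h2
      · rw [if_neg h1, if_pos h2, h2]
        have hc2 := bootExp_congr N N1 N2 (f := fun c =>
            (if c a = 0 ∧ c b = 1 then (1 : ℝ) else 0) * (if c b = 0 then (1 : ℝ) else 0))
          (g := fun _ => (0 : ℝ)) (fun c => by
            by_cases h3 : c b = 0
            · have : ¬ (c a = 0 ∧ c b = 1) := by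
                rintro ⟨-, h4⟩; rw [h3] at h4; exact absurd h4 (by decide)
              simp [this]
            · simp [h3])
        rw [hc2, bootExp_const N N1 N2 hN hsum]
      · rw [if_neg h1, if_neg h2]
        exact bootExp_triple N N1 N2 hN hsum hab (fun e => h1 e.symm) (fun e => h2 e.symm)
  rw [Finset.sum_congr rfl (fun i _ => hstep i), Finset.sum_sub_distrib]
  have hsplit : ∀ i : Fin N,
      (if i = a then w0 * w1 else if i = b then 0 else w0 * w1 * w0)
        = w0 * w1 * w0 + (if i = a then w0 * w1 - w0 * w1 * w0 else 0)
            + (if i = b then -(w0 * w1 * w0) else 0) := by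
    intro i
    rcases eq_or_ne i a with h1 | h1
    · subst h1; rw [if_pos rfl, if_pos rfl, if_neg hab]; ring
    · rcases eq_or_ne i b with h2 | h2
      · subst h2; rw [if_neg h1, if_pos rfl, if_neg h1, if_pos rfl]; ring
      · rw [if_neg h1, if_neg h2, if_neg h1, if_neg h2]; ring
  rw [Finset.sum_congr rfl (fun i _ => hsplit i), Finset.sum_add_distrib,
    Finset.sum_add_distrib, Finset.sum_const, Finset.card_univ, Fintype.card_fin,
    Finset.sum_ite_eq' Finset.univ a, Finset.sum_ite_eq' Finset.univ b,
    if_pos (Finset.mem_univ a), if_pos (Finset.mem_univ b),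
    Finset.sum_const, Finset.card_univ, Fintype.card_fin, nsmul_eq_mul, nsmul_eq_mul]
  rw [hw0, hw1]
  field_simp
  ring

/-- Under the bootstrap labeling, the covariance of the standardized graph statistic
`R = √N (T - N1N2/N²)` and the centered bootstrap count `B̄ = (1/√N)∑(1{cᵢ=1} - N1/N)`
equals exactly `N1N2/N² + (N-2)·N1²N2/N³ - N1²N2/N²`; and this expression converges to
`(1/2)·r·(1-2p)` with `r = 2p(1-p)` whenever `N → ∞` and `N1/N → p`. -/
theorem stmt7 (N N1 N2 : ℕ) (hN : 0 < N) (hsum : N1 + N2 = N)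
    (E : Finset (Fin N × Fin N)) (hE : 0 < E.card) (hloop : ∀ e ∈ E, e.1 ≠ e.2) :
    (bootExp N N1 N2 (fun c =>
        (Real.sqrt N * ((∑ e ∈ E, if c e.1 = 0 ∧ c e.2 = 1 then (1 : ℝ) else 0) / E.card
            - (N1 : ℝ) * N2 / (N : ℝ) ^ 2)) *
        ((1 / Real.sqrt N) * ∑ i : Fin N, ((if c i = 0 then (1 : ℝ) else 0) - (N1 : ℝ) / N)))
      - bootExp N N1 N2 (fun c =>
          Real.sqrt N * ((∑ e ∈ E, if c e.1 = 0 ∧ c e.2 = 1 then (1 : ℝ) else 0) / E.card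
            - (N1 : ℝ) * N2 / (N : ℝ) ^ 2))
        * bootExp N N1 N2 (fun c =>
            (1 / Real.sqrt N) * ∑ i : Fin N, ((if c i = 0 then (1 : ℝ) else 0) - (N1 : ℝ) / N))
      = (N1 : ℝ) * N2 / (N : ℝ) ^ 2 + ((N : ℝ) - 2) * ((N1 : ℝ) ^ 2 * N2 / (N : ℝ) ^ 3)
          - (N1 : ℝ) ^ 2 * N2 / (N : ℝ) ^ 2)
    ∧ ∀ (p : ℝ) (Nf N1f N2f : ℕ → ℕ),
        (∀ k, N1f k + N2f k = Nf k) →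
        Tendsto (fun k => (Nf k : ℝ)) atTop atTop →
        Tendsto (fun k => (N1f k : ℝ) / (Nf k : ℝ)) atTop (nhds p) →
        Tendsto (fun k =>
            (N1f k : ℝ) * (N2f k : ℝ) / (Nf k : ℝ) ^ 2
              + ((Nf k : ℝ) - 2) * ((N1f k : ℝ) ^ 2 * (N2f k : ℝ) / (Nf k : ℝ) ^ 3)
              - (N1f k : ℝ) ^ 2 * (N2f k : ℝ) / (Nf k : ℝ) ^ 2)
          atTop (nhds ((1 / 2) * (2 * p * (1 - p)) * (1 - 2 * p))) := by
  constructor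
  · have hNne : (N : ℝ) ≠ 0 := Nat.cast_ne_zero.mpr hN.ne'
    have hcard : (E.card : ℝ) ≠ 0 := Nat.cast_ne_zero.mpr hE.ne'
    have hs : Real.sqrt N ≠ 0 :=
      ne_of_gt (Real.sqrt_pos.mpr (by exact_mod_cast hN))
    -- raw centered count has expectation 0
    have hB0 : bootExp N N1 N2 (fun c =>
        ∑ i : Fin N, ((if c i = 0 then (1 : ℝ) else 0) - (N1 : ℝ) / N)) = 0 := by
      rw [bootExp_sum]
      refine Finset.sum_eq_zero fun i _ => ?_
      have h1 := bootExp_sub N N1 N2 (fun c => if c i = 0 then (1 : ℝ) else 0)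
        (fun _ => (N1 : ℝ) / N)
      rw [h1, bootExp_ind0 N N1 N2 hN hsum i, bootExp_const N N1 N2 hN hsum, sub_self]
    have hBbar : bootExp N N1 N2 (fun c =>
        (1 / Real.sqrt N) * ∑ i : Fin N, ((if c i = 0 then (1 : ℝ) else 0) - (N1 : ℝ) / N))
        = 0 := by
      rw [bootExp_const_mul, hB0, mul_zero]
    rw [hBbar, mul_zero, sub_zero]
    -- strip the sqrt factors
    have h1 := bootExp_congr N N1 N2 (f := fun c =>
        (Real.sqrt N * ((∑ e ∈ E, if c e.1 = 0 ∧ c e.2 = 1 then (1 : ℝ) else 0) / E.card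
            - (N1 : ℝ) * N2 / (N : ℝ) ^ 2)) *
        ((1 / Real.sqrt N) * ∑ i : Fin N, ((if c i = 0 then (1 : ℝ) else 0) - (N1 : ℝ) / N)))
      (g := fun c =>
        (1 / (E.card : ℝ)) * ((∑ e ∈ E, if c e.1 = 0 ∧ c e.2 = 1 then (1 : ℝ) else 0)
            * ∑ i : Fin N, ((if c i = 0 then (1 : ℝ) else 0) - (N1 : ℝ) / N))
          - ((N1 : ℝ) * N2 / (N : ℝ) ^ 2)
            * ∑ i : Fin N, ((if c i = 0 then (1 : ℝ) else 0) - (N1 : ℝ) / N))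
      (fun c => by
        rw [mul_mul_mul_comm, mul_one_div_cancel hs, one_mul]
        ring)
    rw [h1]
    have h2 := bootExp_sub N N1 N2
      (fun c => (1 / (E.card : ℝ)) * ((∑ e ∈ E, if c e.1 = 0 ∧ c e.2 = 1 then (1 : ℝ) else 0)
            * ∑ i : Fin N, ((if c i = 0 then (1 : ℝ) else 0) - (N1 : ℝ) / N)))
      (fun c => ((N1 : ℝ) * N2 / (N : ℝ) ^ 2)
            * ∑ i : Fin N, ((if c i = 0 then (1 : ℝ) else 0) - (N1 : ℝ) / N))
    rw [h2, bootExp_const_mul, bootExp_const_mul, hB0, mul_zero, sub_zero]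
    -- expand the product of sums
    have h3 := bootExp_congr N N1 N2 (f := fun c =>
        (∑ e ∈ E, if c e.1 = 0 ∧ c e.2 = 1 then (1 : ℝ) else 0)
          * ∑ i : Fin N, ((if c i = 0 then (1 : ℝ) else 0) - (N1 : ℝ) / N))
      (g := fun c => ∑ e ∈ E, ∑ i : Fin N,
          (if c e.1 = 0 ∧ c e.2 = 1 then (1 : ℝ) else 0)
            * ((if c i = 0 then (1 : ℝ) else 0) - (N1 : ℝ) / N))
      (fun c => by
        rw [Finset.sum_mul]
        exact Finset.sum_congr rfl fun e _ => Finset.mul_sum _ _ _)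
    rw [h3, bootExp_sum]
    have h4 : ∀ e ∈ E, bootExp N N1 N2 (fun c => ∑ i : Fin N,
          (if c e.1 = 0 ∧ c e.2 = 1 then (1 : ℝ) else 0)
            * ((if c i = 0 then (1 : ℝ) else 0) - (N1 : ℝ) / N))
        = (N1 : ℝ) * N2 / (N : ℝ) ^ 2 + ((N : ℝ) - 2) * ((N1 : ℝ) ^ 2 * N2 / (N : ℝ) ^ 3)
            - (N1 : ℝ) ^ 2 * N2 / (N : ℝ) ^ 2 := by
      intro e he
      rw [bootExp_sum]
      exact edge_sum N N1 N2 hN hsum (hloop e he)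
    rw [Finset.sum_congr rfl h4, Finset.sum_const, nsmul_eq_mul, ← mul_assoc,
      one_div_mul_cancel hcard, one_mul]
  · intro p Nf N1f N2f hsumf hNf hpf
    have hlim : Tendsto (fun k => ((N1f k : ℝ) / (Nf k)) * (1 - (N1f k : ℝ) / (Nf k))
        * (1 - 2 * ((N1f k : ℝ) / (Nf k)))) atTop (nhds (p * (1 - p) * (1 - 2 * p))) :=
      ((hpf.mul (tendsto_const_nhds.sub hpf)).mul
        (tendsto_const_nhds.sub (hpf.const_mul 2)))
    have heq : (fun k => ((N1f k : ℝ) / (Nf k)) * (1 - (N1f k : ℝ) / (Nf k))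
        * (1 - 2 * ((N1f k : ℝ) / (Nf k)))) =ᶠ[atTop] (fun k =>
            (N1f k : ℝ) * (N2f k : ℝ) / (Nf k : ℝ) ^ 2
              + ((Nf k : ℝ) - 2) * ((N1f k : ℝ) ^ 2 * (N2f k : ℝ) / (Nf k : ℝ) ^ 3)
              - (N1f k : ℝ) ^ 2 * (N2f k : ℝ) / (Nf k : ℝ) ^ 2) := by
      filter_upwards [hNf.eventually_gt_atTop 0] with k hk
      have hne : (Nf k : ℝ) ≠ 0 := ne_of_gt hk
      have hb : (N2f k : ℝ) = (Nf k : ℝ) - (N1f k : ℝ) := by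
        have := hsumf k
        have : (N1f k : ℝ) + (N2f k : ℝ) = (Nf k : ℝ) := by exact_mod_cast congrArg (Nat.cast : ℕ → ℝ) this
        linarith
      rw [hb]
      field_simp
      ring
    have hfinal : (1 / 2) * (2 * p * (1 - p)) * (1 - 2 * p) = p * (1 - p) * (1 - 2 * p) := by
      ring
    rw [hfinal]
    exact hlim.congr' heq
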